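/- arXiv:2307.10306 — 3 statements merged into one kernel-verified Lean document; each statement's English description precedes it below -/
import Mathlib

section
/- Let Q be a polarized quiver in which all special arrows are loops, and let w be a symmetric string for Q (that is, w ∈ St(Q) with w = w^{-1}). Then there exist a unique left inextensible word v and a unique special letter ε* with ε* = (ε*)^{-1} such that w = v ε* v^{-1}. -/
/- Core combinatorics of polarized quivers, letters, words, strings and bands,
   following Geiß, "Homomorphisms between representations of skewed-gentle algebras". -/

namespace SG

open Classical

/-- Signs: `true` stands for `+1`, `false` for `-1`. -/
abbrev Sign := Bool

/-- The raw data of a polarized quiver: vertices, arrows, a set of special arrows,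
and polarized source/target maps with values in `V × {±1}`. -/
structure PolQuiv where
  V : Type
  A : Type
  special : A → Prop
  src : A → V × Sign
  tgt : A → V × Sign

/-- The five kinds of letters associated to a polarized quiver:
direct (ordinary), inverse, special, trivial and trivial inverse letters. -/
inductive PLetter (V A : Type) where
  | ord : A → PLetter V A
  | inv : A → PLetter V A
  | sp : A → PLetter V A
  | triv : V → Sign → PLetter V A
  | trivInv : V → Sign → PLetter V A

namespace PolQuiv

variable (Q : PolQuiv)

/-- `-(i,ρ) = (i,-ρ)`. -/
def nneg (p : Q.V × Sign) : Q.V × Sign := (p.1, !p.2)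

/-- The axioms of a polarized quiver: finiteness, injectivity of the polarized source and
target maps, special arrows have polarization `-1` at both ends, and every special arrow
has a unique dual special arrow. -/
def IsPolarized : Prop :=
  Finite Q.V ∧ Finite Q.A ∧
  Function.Injective Q.src ∧ Function.Injective Q.tgt ∧
  (∀ a, Q.special a → (Q.src a).2 = false ∧ (Q.tgt a).2 = false) ∧
  (∀ a, Q.special a → ∃! a', Q.special a' ∧ Q.src a' = Q.tgt a ∧ Q.tgt a' = Q.src a)

/-- The dual special arrow `ε'` of a special arrow `ε` (junk value on other arrows). -/
noncomputable def dual (a : Q.A) : Q.A :=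
  if h : ∃ a', Q.special a' ∧ Q.src a' = Q.tgt a ∧ Q.tgt a' = Q.src a then h.choose else a

/-- An admissible path `a₁ a₂ ⋯ a_l` : `s(aᵢ) = -t(a_{i+1})`. -/
def IsAdmPath (p : List Q.A) : Prop :=
  p ≠ [] ∧ ∀ n a b, p[n]? = some a → p[n + 1]? = some b → Q.src a = Q.nneg (Q.tgt b)

/-- An admissible polarized quiver has only finitely many admissible paths. -/
def IsAdmissible : Prop := Q.IsPolarized ∧ {p : List Q.A | Q.IsAdmPath p}.Finite

/-- A loop. -/
def IsLoopArr (a : Q.A) : Prop := (Q.src a).1 = (Q.tgt a).1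

/-- A skewed-gentle polarized quiver: admissible, and all special arrows are loops. -/
def SkewedGentle : Prop := Q.IsAdmissible ∧ ∀ a, Q.special a → Q.IsLoopArr a

/-- A gentle polarized quiver: admissible with no special arrows. -/
def Gentle : Prop := Q.IsAdmissible ∧ ∀ a, ¬ Q.special a

abbrev Ltr := PLetter Q.V Q.A
abbrev Wd := List (PLetter Q.V Q.A)

/-- `(i,ρ)` admits trivial letters iff it is not the source of a special arrow. -/
def trivOK (i : Q.V) (ρ : Sign) : Prop := ∀ ε, Q.special ε → Q.src ε ≠ (i, ρ)

/-- Validity of a letter for `Q`. -/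
def IsLetter : Q.Ltr → Prop
  | .ord a => ¬ Q.special a
  | .inv a => ¬ Q.special a
  | .sp a => Q.special a
  | .triv i ρ => Q.trivOK i ρ
  | .trivInv i ρ => Q.trivOK i ρ

/-- The (partial) source of a letter; `none` encodes `*`. -/
def lsrc : Q.Ltr → Option (Q.V × Sign)
  | .ord a => some (Q.src a)
  | .inv a => some (Q.tgt a)
  | .sp a => some ((Q.src a).1, false)
  | .triv _ _ => none
  | .trivInv i ρ => some (i, ρ)

/-- The (partial) target of a letter; `none` encodes `*`. -/
def ltgt : Q.Ltr → Option (Q.V × Sign)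
  | .ord a => some (Q.tgt a)
  | .inv a => some (Q.src a)
  | .sp a => some ((Q.tgt a).1, false)
  | .triv i ρ => some (i, ρ)
  | .trivInv _ _ => none

/-- The inverse of a letter; `(ε^*)⁻¹ = (ε')^*`. -/
noncomputable def linv : Q.Ltr → Q.Ltr
  | .ord a => .inv a
  | .inv a => .ord a
  | .sp a => .sp (Q.dual a)
  | .triv i ρ => .trivInv i ρ
  | .trivInv i ρ => .triv i ρ

/-- The inverse of a word. -/
noncomputable def winv (w : Q.Wd) : Q.Wd := (w.map Q.linv).reverse

/-- A word: all letters valid and `s(wᵢ) = -t(w_{i+1})`. -/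
def IsWord (w : Q.Wd) : Prop :=
  (∀ l ∈ w, Q.IsLetter l) ∧
  ∀ n a b, w[n]? = some a → w[n + 1]? = some b →
    ∃ p, Q.lsrc a = some p ∧ Q.ltgt b = some (Q.nneg p)

/-- A word is right inextensible iff its last letter is a trivial letter. -/
def RightInext (w : Q.Wd) : Prop := ∃ i ρ, w.getLast? = some (.triv i ρ)

/-- A word is left inextensible iff its inverse is right inextensible. -/
def LeftInext (w : Q.Wd) : Prop := Q.RightInext (Q.winv w)

/-- A string: a left and right inextensible word. -/
def IsString (w : Q.Wd) : Prop := Q.IsWord w ∧ Q.LeftInext w ∧ Q.RightInext w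

/-- A band: a (nonempty) word `w` such that `ww` is also a word. -/
def IsBand (w : Q.Wd) : Prop := w ≠ [] ∧ Q.IsWord (w ++ w)

/-- A primitive word is not a proper power. -/
def Primitive (w : Q.Wd) : Prop :=
  ¬ ∃ (v : Q.Wd) (n : ℕ), 2 ≤ n ∧ w = (List.replicate n v).flatten

/-- The rotation `w^{[k+1]} w_{[k]}` of a word. -/
def rot (w : Q.Wd) (k : ℕ) : Q.Wd := w.drop k ++ w.take k

/-- A symmetric string: `w = w⁻¹`. -/
def SymmString (w : Q.Wd) : Prop := Q.IsString w ∧ Q.winv w = w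

/-- Primitive bands. -/
def pBa (w : Q.Wd) : Prop := Q.IsBand w ∧ Q.Primitive w

/-- A symmetric (primitive) band: `w⁻¹` is a rotation of `w`. -/
def SymmBand (w : Q.Wd) : Prop := Q.pBa w ∧ ∃ k, Q.winv w = Q.rot w k

/-- A symmetric primitive band in standard form `ε^* v ζ^* v⁻¹`. -/
def StdSymmBand (w : Q.Wd) : Prop :=
  Q.pBa w ∧ ∃ (a b : Q.A) (v : Q.Wd), Q.special a ∧ Q.special b ∧
    w = .sp a :: (v ++ .sp b :: Q.winv v)

/-- `pBa'`: asymmetric primitive bands together with symmetric primitive bands in standard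
form. -/
def pBa' (w : Q.Wd) : Prop :=
  (Q.pBa w ∧ ¬ ∃ k, Q.winv w = Q.rot w k) ∨ Q.StdSymmBand w

/-- The partial order on letters with a common target: `α < 1_{i,ρ} < β⁻¹`. -/
def letterLT : Q.Ltr → Q.Ltr → Prop
  | .ord a, .triv i ρ => ¬ Q.special a ∧ Q.trivOK i ρ ∧ Q.tgt a = (i, ρ)
  | .ord a, .inv b => ¬ Q.special a ∧ ¬ Q.special b ∧ Q.tgt a = Q.src b
  | .triv i ρ, .inv b => ¬ Q.special b ∧ Q.trivOK i ρ ∧ Q.src b = (i, ρ)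
  | _, _ => False

/-- The induced lexicographic order on words. -/
def wordLT (v w : Q.Wd) : Prop :=
  ∃ (p u u' : Q.Wd) (a b : Q.Ltr), v = p ++ a :: u ∧ w = p ++ b :: u' ∧ Q.letterLT a b

def wordLE (v w : Q.Wd) : Prop := Q.wordLT v w ∨ v = w

/-- The associated gentle polarized quiver `Q̂`: all arrows become ordinary. -/
def hat : PolQuiv := ⟨Q.V, Q.A, fun _ => False, Q.src, Q.tgt⟩

/-- A vertex carrying a special loop. -/
def specialAt (i : Q.V) : Prop := ∃ ε, Q.special ε ∧ (Q.src ε).1 = i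

/-- The special loop at a vertex, as an `Option`. -/
noncomputable def sloopL (i : Q.V) : Option Q.A :=
  if h : Q.specialAt i then some h.choose else none

/-- The `Q̂`-letter `ε^{δ1}` at a vertex carrying a special loop (junk otherwise). -/
noncomputable def epsAt (i : Q.V) (δ : Bool) : Q.Ltr :=
  if h : Q.specialAt i then (if δ then .ord h.choose else .inv h.choose) else .triv i false

/-- The canonical map `F` on letters, from letters of `Q̂` to letters of `Q`. -/
noncomputable def Fmap : Q.Ltr → Q.Ltr
  | .ord a => if Q.special a then .sp a else .ord a
  | .inv a => if Q.special a then .sp (Q.dual a) else .inv a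
  | .sp a => .sp a
  | .triv i ρ => if h : ρ = false ∧ Q.specialAt i then .sp h.2.choose else .triv i ρ
  | .trivInv i ρ => if h : ρ = false ∧ Q.specialAt i then .sp h.2.choose else .trivInv i ρ

/-- `F` on words. -/
noncomputable def Fword (w : Q.Wd) : Q.Wd := w.map Q.Fmap

/-- Punctured letters: trivial letters `1_{i,-1}^{±1}` with a special loop at `i`. -/
def IsPunct : Q.Ltr → Prop
  | .triv i ρ => ρ = false ∧ Q.specialAt i
  | .trivInv i ρ => ρ = false ∧ Q.specialAt i
  | _ => False

def LeftPunct (w : Q.Wd) : Prop := ∃ l, w.head? = some l ∧ Q.IsPunct l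
def RightPunct (w : Q.Wd) : Prop := ∃ l, w.getLast? = some l ∧ Q.IsPunct l

open Classical in
/-- The completion `x̄` of a string or band `x` for `Q̂`: apply `F` after reflecting at each
punctured end. -/
noncomputable def completionW (w : Q.Wd) : Q.Wd :=
  if Q.LeftPunct w then
    if Q.RightPunct w then Q.Fword w ++ Q.Fword (Q.hat.winv ((w.drop 1).dropLast))
    else Q.Fword (Q.hat.winv (w.drop 1)) ++ Q.Fword w
  else
    if Q.RightPunct w then Q.Fword w ++ Q.Fword (Q.hat.winv w.dropLast)
    else Q.Fword w

/-- The letter of `A(w)` at position `k`, for `w` a string: special letters `ε^*` are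
replaced by `ε` if `(w_{[k-1]})⁻¹ > w^{[k+1]}` and by `ε⁻¹` if `(w_{[k-1]})⁻¹ < w^{[k+1]}`. -/
def ALetterStr (w : Q.Wd) (k : ℕ) (xl : Q.Ltr) : Prop :=
  match w[k]? with
  | some (.sp a) =>
      (xl = .ord a ∧ Q.wordLT (w.drop (k + 1)) (Q.winv (w.take k))) ∨
      (xl = .inv a ∧ Q.wordLT (Q.winv (w.take k)) (w.drop (k + 1)))
  | some l => xl = l
  | none => False

/-- The letter of `A(w)` at position `k`, for `w` a band, with the comparison
`w_{[k-1]}⁻¹ (w^{[k+1]})⁻¹` versus `w^{[k+1]} w_{[k-1]}`. -/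
def ALetterBand (w : Q.Wd) (k : ℕ) (xl : Q.Ltr) : Prop :=
  match w[k]? with
  | some (.sp a) =>
      (xl = .ord a ∧
        Q.wordLT (w.drop (k + 1) ++ w.take k) (Q.winv (w.drop (k + 1) ++ w.take k))) ∨
      (xl = .inv a ∧
        Q.wordLT (Q.winv (w.drop (k + 1) ++ w.take k)) (w.drop (k + 1) ++ w.take k))
  | some l => xl = l
  | none => False

/-- `x = A(w)` for an asymmetric string `w`. -/
def AStrAsym (w x : Q.Wd) : Prop :=
  Q.IsString w ∧ Q.winv w ≠ w ∧ x.length = w.length ∧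
  ∀ k xl, x[k]? = some xl → Q.ALetterStr w k xl

/-- `x = A(w)` for a symmetric string `w = v ε^* v⁻¹`. -/
def AStrSym (w x : Q.Wd) : Prop :=
  Q.IsString w ∧ Q.winv w = w ∧
  ∃ (v : Q.Wd) (a : Q.A), Q.special a ∧ w = v ++ .sp a :: Q.winv v ∧
    ∃ y : Q.Wd, y.length = v.length ∧ (∀ k xl, y[k]? = some xl → Q.ALetterStr w k xl) ∧
      x = y ++ [.triv (Q.src a).1 false]

/-- `x = A(w)` for an asymmetric primitive band `w`. -/
def ABandAsym (w x : Q.Wd) : Prop :=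
  Q.pBa w ∧ (¬ ∃ k, Q.winv w = Q.rot w k) ∧ x.length = w.length ∧
  ∀ k xl, x[k]? = some xl → Q.ALetterBand w k xl

/-- `x = A(w)` for a symmetric band in standard form `w = ε_a^* v ε_b^* v⁻¹`. -/
def ABandSym (w x : Q.Wd) : Prop :=
  Q.pBa w ∧ ∃ (a b : Q.A) (v : Q.Wd), Q.special a ∧ Q.special b ∧
    w = .sp a :: (v ++ .sp b :: Q.winv v) ∧
    ∃ y : Q.Wd, y.length = v.length ∧
      (∀ k xl, y[k]? = some xl → Q.ALetterBand w (k + 1) xl) ∧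
      x = .trivInv (Q.src a).1 false :: (y ++ [.triv (Q.src b).1 false])

/-- `x = A(w)` for `w ∈ St(Q) ∪ pBa'(Q)`. -/
def ARel (w x : Q.Wd) : Prop :=
  Q.AStrAsym w x ∨ Q.AStrSym w x ∨ Q.ABandAsym w x ∨ Q.ABandSym w x

/-- Admissible strings for `Q̂` (with respect to `F`), following Qiu–Zhou. -/
def AdmStr (x : Q.Wd) : Prop :=
  Q.hat.IsString x ∧
  (∀ k a, (x[k]? = some (.ord a) ∨ x[k]? = some (.inv a)) → Q.special a →
    Q.hat.winv (x.take k) ≠ x.drop k ∧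
    (x[k]? = some (.ord a) ↔ Q.hat.wordLT (x.drop (k + 1)) (Q.hat.winv (x.take k)))) ∧
  (Q.LeftPunct x → Q.RightPunct x →
    Q.IsBand (Q.completionW x) ∧ Q.Primitive (Q.completionW x))

/-- Admissible bands for `Q̂` (with respect to `F`). -/
def AdmBand (x : Q.Wd) : Prop :=
  Q.hat.IsBand x ∧ Q.hat.Primitive x ∧
  (∀ k a, (x[k]? = some (.ord a) ∨ x[k]? = some (.inv a)) → Q.special a →
    Q.hat.winv (x.drop (k + 1) ++ x.take k) ≠ x.drop (k + 1) ++ x.take k ∧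
    (x[k]? = some (.ord a) ↔
      Q.hat.wordLT (x.drop (k + 1) ++ x.take k)
        (Q.hat.winv (x.drop (k + 1) ++ x.take k)))) ∧
  (Q.IsBand (Q.Fword x) ∧ Q.Primitive (Q.Fword x) ∧
    ¬ ∃ k, Q.winv (Q.Fword x) = Q.rot (Q.Fword x) k)

/-- Admissible words. -/
def IsAdm (x : Q.Wd) : Prop := Q.AdmStr x ∨ Q.AdmBand x

end PolQuiv

end SG


namespace SG

open PolQuiv

private lemma snd_eq_aux (Q : PolQuiv) (l : Q.Ltr) (p q : Q.V × Sign)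
    (h1 : Q.lsrc l = some p) (h2 : Q.ltgt (Q.linv l) = some q) : q.2 = p.2 := by
  cases l <;> simp_all [PolQuiv.lsrc, PolQuiv.ltgt, PolQuiv.linv] <;> simp [← h1, ← h2]

private lemma winv_getElem? (Q : PolQuiv) (w : Q.Wd) (k : ℕ) (hk : k < w.length) :
    (Q.winv w)[k]? = (w[w.length - 1 - k]?).map Q.linv := by
  unfold PolQuiv.winv
  rw [List.getElem?_reverse (by simpa using hk), List.length_map, List.getElem?_map]

/-- **Symmetric strings.**  Let `Q` be a polarized quiver in which all special arrows are
loops, and let `w` be a symmetric string for `Q` (i.e. `w = w⁻¹`).  Then there exist a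
unique left inextensible word `v` and a unique special letter `ε^*` with `ε^* = (ε^*)⁻¹`
such that `w = v ε^* v⁻¹`. -/
theorem statement_3 (Q : PolQuiv) (hpol : Q.IsPolarized)
    (hloops : ∀ a, Q.special a → Q.IsLoopArr a)
    (w : Q.Wd) (hw : Q.IsString w) (hsym : Q.winv w = w) :
    ∃! vε : Q.Wd × Q.Ltr,
      (∃ a, Q.special a ∧ vε.2 = .sp a) ∧ Q.linv vε.2 = vε.2 ∧
      Q.IsWord vε.1 ∧ Q.LeftInext vε.1 ∧ w = vε.1 ++ vε.2 :: Q.winv vε.1 := by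
  classical
  set n := w.length with hn
  -- reversal identity
  have hrev : ∀ k, k < n → w[k]? = (w[n - 1 - k]?).map Q.linv := by
    intro k hk
    conv_lhs => rw [← hsym]
    exact winv_getElem? Q w k hk
  obtain ⟨i0, ρ0, hlast⟩ := hw.2.2
  have hne : w ≠ [] := by
    intro h; rw [h] at hlast; simp at hlast
  have hnpos : 0 < n := by
    simpa [hn] using List.length_pos_iff.2 hne
  have hlast' : w[n - 1]? = some (.triv i0 ρ0) := by
    rw [← List.getLast?_eq_getElem?]; exact hlast
  -- n is odd
  have hodd : ∃ m, n = 2 * m + 1 := by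
    rcases Nat.even_or_odd n with he | ho
    · exfalso
      obtain ⟨m, hm⟩ := he
      have hm1 : 1 ≤ m := by omega
      have h1 : w[m]? = (w[m - 1]?).map Q.linv := by
        have := hrev m (by omega)
        have : w[m]? = (w[n - 1 - m]?).map Q.linv := this
        rwa [show n - 1 - m = m - 1 by omega] at this
      have hma : m - 1 < n := by omega
      set a := w[m - 1]'hma with haa
      have ha : w[m - 1]? = some a := List.getElem?_eq_getElem hma
      have hb : w[m - 1 + 1]? = some (Q.linv a) := by
        rw [show m - 1 + 1 = m by omega, h1, ha]; rfl
      obtain ⟨p, hp1, hp2⟩ := hw.1.2 (m - 1) a (Q.linv a) ha hb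
      have := snd_eq_aux Q a p (Q.nneg p) hp1 hp2
      simp [PolQuiv.nneg] at this
    · obtain ⟨m, hm⟩ := ho
      exact ⟨m, by omega⟩
  obtain ⟨m, hm⟩ := hodd
  -- middle letter
  have hmid0 : w[m]? = (w[m]?).map Q.linv := by
    have := hrev m (by omega)
    rwa [show n - 1 - m = m by omega] at this
  have hmlt : m < n := by omega
  set c := w[m]'hmlt with hcc0
  have hc : w[m]? = some c := List.getElem?_eq_getElem hmlt
  have hcc : c = Q.linv c := by
    have := hmid0; rw [hc] at this; simpa using this
  obtain ⟨a, hca, hda⟩ : ∃ a, c = PLetter.sp a ∧ Q.dual a = a := by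
    clear_value c
    clear hcc0 hc hmid0
    cases c <;> simp [PolQuiv.linv] at hcc ⊢
    exact hcc.symm
  have hmidw : w[m]? = some (.sp a) := by rw [hc, hca]
  have hspa : Q.special a := by
    have hmem : PLetter.sp a ∈ w := List.mem_of_getElem? hmidw
    exact hw.1.1 _ hmem
  have hlinv : Q.linv (PLetter.sp a) = PLetter.sp a := by
    simp [PolQuiv.linv, hda]
  -- m ≥ 1
  have hm1 : 1 ≤ m := by
    by_contra h
    have hm0 : m = 0 := by omega
    rw [hm0] at hmidw
    have : n - 1 = 0 := by omega
    rw [this] at hlast'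
    rw [hlast'] at hmidw
    simp at hmidw
  -- define v
  set v : Q.Wd := w.take m with hv
  have hvlen : v.length = m := by
    rw [hv, List.length_take]; omega
  have hvget : ∀ k, k < m → v[k]? = w[k]? := by
    intro k hk; rw [hv]; exact List.getElem?_take_of_lt hk
  have hwinvlen : ∀ u : Q.Wd, (Q.winv u).length = u.length := by
    intro u; simp [PolQuiv.winv]
  have hwinv_v : ∀ j, j < m → (Q.winv v)[j]? = (w[m - 1 - j]?).map Q.linv := by
    intro j hj
    rw [winv_getElem? Q v j (by omega), hvlen, hvget _ (by omega)]
  -- w = v ++ sp a :: winv v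
  have hsplit : w = v ++ PLetter.sp a :: Q.winv v := by
    apply List.ext_getElem?
    intro k
    rw [List.getElem?_append]
    rcases lt_trichotomy k m with hk | hk | hk
    · rw [if_pos (by rw [hvlen]; omega)]
      exact (hvget k hk).symm
    · subst hk
      rw [if_neg (by rw [hvlen]; omega), hvlen, Nat.sub_self,
        List.getElem?_cons_zero]
      exact hmidw
    · rw [if_neg (by rw [hvlen]; omega), hvlen]
      obtain ⟨j, hj⟩ : ∃ j, k - m = j + 1 := ⟨k - m - 1, by omega⟩
      rw [hj, List.getElem?_cons_succ]
      by_cases hkn : k < n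
      · rw [hwinv_v j (by omega), hrev k hkn, show n - 1 - k = m - 1 - j by omega]
      · rw [List.getElem?_eq_none (by omega : w.length ≤ k),
          List.getElem?_eq_none (by rw [hwinvlen, hvlen]; omega)]
  -- v is a word
  have hvword : Q.IsWord v := by
    constructor
    · intro l hl
      exact hw.1.1 l (List.take_subset m w hl)
    · intro k b c hb hc
      obtain ⟨hk1, -⟩ := List.getElem?_eq_some_iff.1 hc
      rw [hvlen] at hk1
      exact hw.1.2 k b c (by rw [← hvget k (by omega)]; exact hb)
        (by rw [← hvget _ hk1]; exact hc)
  -- first letter of w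
  have hhead : w[0]? = some (PLetter.trivInv i0 ρ0) := by
    rw [hrev 0 hnpos, Nat.sub_zero, hlast']
    rfl
  -- v is left inextensible
  have hvleft : Q.LeftInext v := by
    refine ⟨i0, ρ0, ?_⟩
    rw [List.getLast?_eq_getElem?, hwinvlen, hvlen,
      hwinv_v (m - 1) (by omega), show m - 1 - (m - 1) = 0 by omega, hhead]
    rfl
  refine ⟨(v, PLetter.sp a), ⟨⟨a, hspa, rfl⟩, hlinv, hvword, hvleft, hsplit⟩, ?_⟩
  rintro ⟨v', e'⟩ ⟨⟨b, hb, rfl⟩, hlinv', hword', hleft', hsplit'⟩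
  have hlen' : v'.length = m := by
    have h := congrArg List.length hsplit'
    simp only [List.length_append, List.length_cons, hwinvlen, ← hn] at h
    omega
  have hv' : v' = v := by
    have h : w.take m = v' := by rw [hsplit', ← hlen', List.take_left]
    rw [hv]
    exact h.symm
  have he' : (PLetter.sp b : Q.Ltr) = PLetter.sp a := by
    have h1 : w[m]? = some (PLetter.sp b) := by
      rw [hsplit', List.getElem?_append, if_neg (by rw [hlen']; omega), hlen',
        Nat.sub_self, List.getElem?_cons_zero]
    rw [hmidw] at h1
    exact (Option.some.inj h1).symm
  rw [hv', he']


end SG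
end

section
/- Let Q be a polarized quiver in which all special arrows are loops, and let w be a primitive band for Q. Then w is symmetric (i.e. w^{-1} equals some rotation w^{[k+1]}w_{[k]} of w) if and only if some rotation of w is of the form ε* v ζ* v^{-1} for some word v and special letters ε* and ζ*. -/
namespace SG

open PolQuiv

section Aux

variable (Q : PolQuiv)

/-- The adjacency relation for letters in a word. -/
def Rr (a b : Q.Ltr) : Prop := ∃ p, Q.lsrc a = some p ∧ Q.ltgt b = some (Q.nneg p)

/-- The chain condition of `IsWord`. -/
def Chn (u : Q.Wd) : Prop := ∀ n a b, u[n]? = some a → u[n + 1]? = some b → Rr Q a b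

variable {Q}

lemma chn_prefix {u v : Q.Wd} (h : Chn Q (u ++ v)) : Chn Q u := by
  intro n a b ha hb
  have hn : n + 1 < u.length := (List.getElem?_eq_some_iff.mp hb).1
  apply h n a b
  · rw [List.getElem?_append, if_pos (by omega)]; exact ha
  · rw [List.getElem?_append, if_pos hn]; exact hb

lemma chn_suffix {u v : Q.Wd} (h : Chn Q (u ++ v)) : Chn Q v := by
  intro n a b ha hb
  apply h (u.length + n) a b
  · rw [List.getElem?_append_right (by omega), Nat.add_sub_cancel_left]; exact ha
  · rw [show u.length + n + 1 = u.length + (n + 1) by omega,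
      List.getElem?_append_right (by omega), Nat.add_sub_cancel_left]; exact hb

variable (hpol : Q.IsPolarized) (hloops : ∀ a, Q.special a → Q.IsLoopArr a)
include hpol hloops

lemma dual_eq {a : Q.A} (ha : Q.special a) : Q.dual a = a := by
  obtain ⟨-, -, -, -, h5, h6⟩ := hpol
  have hst : Q.src a = Q.tgt a := by
    have h1 := hloops a ha
    have h2 := h5 a ha
    exact Prod.ext h1 (h2.1.trans h2.2.symm)
  have hex : ∃ a', Q.special a' ∧ Q.src a' = Q.tgt a ∧ Q.tgt a' = Q.src a :=
    ⟨a, ha, hst, hst.symm⟩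
  obtain ⟨a', ha', huniq⟩ := h6 a ha
  rw [PolQuiv.dual, dif_pos hex]
  rw [huniq _ hex.choose_spec, huniq a ⟨ha, hst, hst.symm⟩]

lemma linv_sp {a : Q.A} (ha : Q.special a) :
    Q.linv (.sp a) = .sp a := by
  simp [PolQuiv.linv, dual_eq hpol hloops ha]

lemma linv_linv {x : Q.Ltr} (hx : Q.IsLetter x) : Q.linv (Q.linv x) = x := by
  cases x with
  | sp a => rw [linv_sp hpol hloops hx, linv_sp hpol hloops hx]
  | ord a => rfl
  | inv a => rfl
  | triv i ρ => rfl
  | trivInv i ρ => rfl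

lemma ltgt_linv {x : Q.Ltr} (hx : Q.IsLetter x) : Q.ltgt (Q.linv x) = Q.lsrc x := by
  cases x with
  | sp a =>
    rw [linv_sp hpol hloops hx]
    simp [PolQuiv.ltgt, PolQuiv.lsrc, (hloops a hx).symm]
  | ord a => rfl
  | inv a => rfl
  | triv i ρ => rfl
  | trivInv i ρ => rfl

lemma lsrc_linv {x : Q.Ltr} (hx : Q.IsLetter x) : Q.lsrc (Q.linv x) = Q.ltgt x := by
  conv_rhs => rw [← linv_linv hpol hloops hx]
  rw [ltgt_linv hpol hloops]
  cases x with
  | sp a => rw [linv_sp hpol hloops hx]; exact hx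
  | ord a => exact hx
  | inv a => exact hx
  | triv i ρ => exact hx
  | trivInv i ρ => exact hx

lemma noR {x : Q.Ltr} (hx : Q.IsLetter x) : ¬ Rr Q x (Q.linv x) := by
  rintro ⟨p, h1, h2⟩
  rw [ltgt_linv hpol hloops hx, h1] at h2
  have : p = Q.nneg p := by injection h2
  have := congrArg Prod.snd this
  simp [PolQuiv.nneg] at this

lemma noR' {x : Q.Ltr} (hx : Q.IsLetter x) : ¬ Rr Q (Q.linv x) x := by
  rintro ⟨p, h1, h2⟩
  rw [lsrc_linv hpol hloops hx] at h1
  rw [h1] at h2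
  have : p = Q.nneg p := by injection h2
  have := congrArg Prod.snd this
  simp [PolQuiv.nneg] at this

omit hpol hloops

@[simp] lemma winv_nil : Q.winv [] = [] := rfl

lemma winv_append (u v : Q.Wd) : Q.winv (u ++ v) = Q.winv v ++ Q.winv u := by
  simp [PolQuiv.winv]

lemma winv_cons (x : Q.Ltr) (u : Q.Wd) :
    Q.winv (x :: u) = Q.winv u ++ [Q.linv x] := by
  simp [PolQuiv.winv]

lemma winv_singleton (x : Q.Ltr) : Q.winv [x] = [Q.linv x] := by
  simp [PolQuiv.winv]

lemma length_winv (u : Q.Wd) : (Q.winv u).length = u.length := by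
  simp [PolQuiv.winv]

lemma getLast?_winv (u : Q.Wd) : (Q.winv u).getLast? = u.head?.map Q.linv := by
  simp [PolQuiv.winv, List.getLast?_reverse, List.head?_map]

include hpol hloops

lemma winv_winv {u : Q.Wd} (h : ∀ l ∈ u, Q.IsLetter l) : Q.winv (Q.winv u) = u := by
  unfold PolQuiv.winv
  rw [List.map_reverse, List.reverse_reverse, List.map_map]
  conv_rhs => rw [← List.map_id u]
  exact List.map_congr_left fun x hx => linv_linv hpol hloops (h x hx)

omit hpol hloops

lemma rot_of_ge {w : Q.Wd} {k : ℕ} (h : w.length ≤ k) : Q.rot w k = w := by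
  simp [PolQuiv.rot, List.drop_eq_nil_of_le h, List.take_of_length_le h]

lemma rot_iff {w x : Q.Wd} : (∃ k, x = Q.rot w k) ↔ w.IsRotated x := by
  constructor
  · rintro ⟨k, rfl⟩
    rcases le_or_gt k w.length with h | h
    · exact ⟨k, List.rotate_eq_drop_append_take h⟩
    · rw [rot_of_ge h.le]
  · rintro ⟨m, rfl⟩
    rcases eq_or_ne w [] with rfl | hne
    · exact ⟨0, by simp [PolQuiv.rot]⟩
    · have hlen : 0 < w.length := List.length_pos_iff.mpr hne
      refine ⟨m % w.length, ?_⟩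
      rw [← List.rotate_mod, List.rotate_eq_drop_append_take (Nat.mod_lt _ hlen).le]
      rfl

lemma winv_rot {w : Q.Wd} {k : ℕ} (hk : k ≤ w.length) :
    Q.winv (Q.rot w k) = Q.rot (Q.winv w) (w.length - k) := by
  have h1 : Q.winv w = Q.winv (w.drop k) ++ Q.winv (w.take k) := by
    conv_lhs => rw [← List.take_append_drop k w]
    rw [winv_append]
  have h2 : (Q.winv (w.drop k)).length = w.length - k := by
    rw [length_winv, List.length_drop]
  show Q.winv (w.drop k ++ w.take k) = (Q.winv w).drop (w.length - k) ++ (Q.winv w).take (w.length - k)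
  rw [winv_append, h1, ← h2, List.drop_left, List.take_left]

lemma winv_isRotated {w x : Q.Wd} (h : w.IsRotated x) :
    (Q.winv w).IsRotated (Q.winv x) := by
  obtain ⟨k, rfl⟩ := rot_iff.mpr h
  rcases le_or_gt k w.length with hk | hk
  · rw [winv_rot hk]
    exact rot_iff.mp ⟨_, rfl⟩
  · rw [rot_of_ge hk.le]

include hpol hloops

/-- Structure of nonempty `winv`-palindromic words: a special letter in the middle. -/
lemma palin : ∀ (N : ℕ) (u : Q.Wd), u.length ≤ N → Q.winv u = u → u ≠ [] →
    (∀ l ∈ u, Q.IsLetter l) → Chn Q u →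
    ∃ (v : Q.Wd) (a : Q.A), Q.special a ∧ u = v ++ .sp a :: Q.winv v := by
  intro N
  induction N with
  | zero =>
    intro u hlen _ hne _ _
    exact absurd (List.length_eq_zero_iff.mp (Nat.le_zero.mp hlen)) hne
  | succ N ih =>
    intro u hlen hwinv hne hval hchn
    obtain ⟨x, u₂, rfl⟩ := List.exists_cons_of_ne_nil hne
    rcases List.eq_nil_or_concat u₂ with rfl | ⟨mid, y, rfl⟩
    · -- singleton case
      have hx : Q.linv x = x := by
        have h := hwinv
        rw [show ([x] : Q.Wd) = x :: [] from rfl, winv_cons, winv_nil] at h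
        simpa using h
      cases x with
      | sp a =>
        refine ⟨[], a, ?_, by simp⟩
        have h := hval (.sp a) (by simp)
        exact h
      | ord a => simp [PolQuiv.linv] at hx
      | inv a => simp [PolQuiv.linv] at hx
      | triv i ρ => simp [PolQuiv.linv] at hx
      | trivInv i ρ => simp [PolQuiv.linv] at hx
    · simp only [List.concat_eq_append] at hlen hwinv hne hval hchn ⊢
      have hxy : Q.winv (x :: (mid ++ [y])) = Q.linv y :: (Q.winv mid ++ [Q.linv x]) := by
        rw [winv_cons, winv_append, winv_singleton]
        simp
      rw [hxy] at hwinv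
      injection hwinv with h1 h2
      have hy : Q.IsLetter y := hval y (by simp)
      have hxv : Q.linv x = y := by rw [← h1, linv_linv hpol hloops hy]
      rw [hxv] at h2
      have hmid : Q.winv mid = mid := List.append_cancel_right h2
      rcases eq_or_ne mid [] with rfl | hmne
      · exfalso
        have hR : Rr Q x y := hchn 0 x y (by simp) (by simp)
        rw [← hxv] at hR
        exact noR hpol hloops (hval x (by simp)) hR
      · have hchn' : Chn Q mid := by
          have h3 : Chn Q (mid ++ [y]) := chn_suffix (u := [x]) hchn
          exact chn_prefix h3
        obtain ⟨v, a, ha, hmid'⟩ := ih mid (by simp at hlen; omega) hmid hmne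
          (fun l hl => hval l (by simp [hl])) hchn'
        refine ⟨x :: v, a, ha, ?_⟩
        rw [winv_cons, hxv, hmid']
        simp

omit hpol hloops

end Aux

/-- **Symmetric bands.**  Let `Q` be a polarized quiver in which all special arrows are
loops and `w` a primitive band for `Q`.  Then `w` is symmetric (i.e. `w⁻¹` is a rotation of
`w`) if and only if some rotation of `w` has the form `ε^* v ζ^* v⁻¹` for some word `v` and
special letters `ε^*`, `ζ^*`. -/
theorem statement_4 (Q : PolQuiv) (hpol : Q.IsPolarized)
    (hloops : ∀ a, Q.special a → Q.IsLoopArr a)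
    (w : Q.Wd) (hw : Q.pBa w) :
    (∃ k, Q.winv w = Q.rot w k) ↔
      ∃ (k : ℕ) (a b : Q.A) (v : Q.Wd), Q.special a ∧ Q.special b ∧
        Q.rot w k = .sp a :: (v ++ .sp b :: Q.winv v) := by
  obtain ⟨⟨hne, hword⟩, hprim⟩ := hw
  have hnpos : 0 < w.length := List.length_pos_iff.mpr hne
  have hval : ∀ l ∈ w, Q.IsLetter l := fun l hl => hword.1 l (List.mem_append_left _ hl)
  have hchn2 : Chn Q (w ++ w) := hword.2
  have hchnw : Chn Q w := chn_prefix hchn2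
  constructor
  · rintro ⟨k, hk⟩
    set k₀ := min k w.length with hk0def
    have hk0n : k₀ ≤ w.length := min_le_right _ _
    have hk' : Q.winv w = Q.rot w k₀ := by
      rcases le_or_gt k w.length with h | h
      · rw [hk0def, min_eq_left h]; exact hk
      · rw [hk0def, min_eq_right h.le, rot_of_ge (le_refl w.length)]
        rw [rot_of_ge h.le] at hk
        exact hk
    by_cases hsym : Q.winv w = w
    · exfalso
      set x := w.head hne with hxdef
      have hx : w.head? = some x := List.head?_eq_head hne
      have hlast : w.getLast? = some (Q.linv x) := by
        conv_lhs => rw [← hsym]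
        rw [getLast?_winv, hx]
        rfl
      have hR : Rr Q (Q.linv x) x := by
        apply hchn2 (w.length - 1)
        · rw [List.getElem?_append, if_pos (by omega), ← List.getLast?_eq_getElem?]
          exact hlast
        · rw [show w.length - 1 + 1 = w.length by omega,
            List.getElem?_append_right le_rfl, Nat.sub_self, ← List.head?_eq_getElem?]
          exact hx
      exact noR' hpol hloops (hval x (List.head_mem hne)) hR
    · set s := w.take k₀ with hsdef
      set t := w.drop k₀ with htdef
      have hw_eq : w = s ++ t := (List.take_append_drop k₀ w).symm
      have hrots : Q.rot w k₀ = t ++ s := rfl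
      have hwinv_eq : Q.winv t ++ Q.winv s = t ++ s := by
        rw [← winv_append, ← hw_eq, hk', hrots]
      obtain ⟨ht, hs⟩ := List.append_inj hwinv_eq (length_winv t)
      have hs_ne : s ≠ [] := by
        intro h
        apply hsym
        rw [hk', hrots, h, List.append_nil]
        conv_rhs => rw [hw_eq, h, List.nil_append]
      have ht_ne : t ≠ [] := by
        intro h
        apply hsym
        rw [hk', hrots, h, List.nil_append]
        conv_rhs => rw [hw_eq, h, List.append_nil]
      have hvals : ∀ l ∈ s, Q.IsLetter l := fun l hl => hval l (List.take_subset _ _ hl)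
      have hvalt : ∀ l ∈ t, Q.IsLetter l := fun l hl => hval l (List.drop_subset _ _ hl)
      have hchnst : Chn Q (s ++ t) := hw_eq ▸ hchnw
      obtain ⟨v1, a, ha, hs'⟩ :=
        palin hpol hloops s.length s le_rfl hs hs_ne hvals (chn_prefix hchnst)
      obtain ⟨v2, b, hb, ht'⟩ :=
        palin hpol hloops t.length t le_rfl ht ht_ne hvalt (chn_suffix hchnst)
      refine ⟨v1.length, a, b, Q.winv v1 ++ v2, ha, hb, ?_⟩
      have hv1val : ∀ l ∈ v1, Q.IsLetter l := fun l hl =>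
        hvals l (hs' ▸ List.mem_append_left _ hl)
      have hwv1 : Q.winv (Q.winv v1 ++ v2) = Q.winv v2 ++ v1 := by
        rw [winv_append, winv_winv hpol hloops hv1val]
      rw [hwv1]
      have hw2 : w = v1 ++ (PLetter.sp a :: (Q.winv v1 ++ (v2 ++ .sp b :: Q.winv v2))) := by
        rw [hw_eq, hs', ht']
        simp
      show w.drop v1.length ++ w.take v1.length = _
      rw [hw2, List.drop_left, List.take_left]
      simp
  · rintro ⟨k, a, b, v, ha, hb, hk⟩
    have hWu : w.IsRotated (Q.rot w k) := rot_iff.mp ⟨k, rfl⟩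
    have hrotsub : ∀ l ∈ Q.rot w k, l ∈ w := by
      intro l hl
      rcases List.mem_append.mp hl with h | h
      · exact List.drop_subset _ _ h
      · exact List.take_subset _ _ h
    have hvval : ∀ l ∈ v, Q.IsLetter l := by
      intro l hl
      apply hval
      apply hrotsub
      rw [hk]
      simp [hl]
    have hrotinv : Q.winv (Q.rot w k) = Q.rot (Q.rot w k) 1 := by
      rw [hk, winv_cons, winv_append, winv_cons, winv_winv hpol hloops hvval,
        linv_sp hpol hloops ha, linv_sp hpol hloops hb]
      show _ = (v ++ PLetter.sp b :: Q.winv v) ++ [PLetter.sp a]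
      simp
    have h2 : (Q.rot w k).IsRotated (Q.winv (Q.rot w k)) := rot_iff.mp ⟨1, hrotinv⟩
    have h3 : (Q.winv w).IsRotated (Q.winv (Q.rot w k)) := winv_isRotated hWu
    exact rot_iff.mpr (hWu.trans (h2.trans h3.symm))

end SG
end

section
/- Let k be a field of characteristic different from 2, m ≥ 1, and δ ∈ {1,−1}. Let J_m(δ) be the m×m Jordan block with eigenvalue δ (entries δ on the diagonal, 1 on the first subdiagonal used in the paper's convention, 0 elsewhere), and let S̃_{m,δ} be the m×m matrix with entries (S̃_{m,δ})_{i,j} = (−1)^{i+1} δ^{i+j} C(i,j) for 1 ≤ j ≤ i ≤ m and 0 for 1 ≤ i < j ≤ m, where C(i,j) is the binomial coefficient. Then S̃_{m,δ}^2 = E_m (the identity matrix) and S̃_{m,δ} · J_m(δ) = J_m(δ)^{-1} · S̃_{m,δ}. Consequently, setting W_{m,δ}(S) := S̃_{m,δ}·J_m(δ) and W_{m,δ}(T) := S̃_{m,δ} defines a pair of involutive m×m matrices, i.e. W_{m,δ}(S)^2 = E_m and W_{m,δ}(T)^2 = E_m. -/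
namespace SG

open Matrix

/-- The `m×m` Jordan block with eigenvalue `δ`: entries `δ` on the diagonal and `1` on the
first subdiagonal. -/
def Jmat (k : Type) [Field k] (m : ℕ) (δ : k) : Matrix (Fin m) (Fin m) k :=
  Matrix.of fun i j => if i = j then δ else if (i : ℕ) = (j : ℕ) + 1 then 1 else 0

/-- The matrix `S̃_{m,δ}` with entries `(-1)^{i+1} δ^{i+j} C(i,j)` for `1 ≤ j ≤ i ≤ m`
(in the paper's 1-based indexing) and `0` above the diagonal. -/
def Smat (k : Type) [Field k] (m : ℕ) (δ : k) : Matrix (Fin m) (Fin m) k :=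
  Matrix.of fun i j =>
    if (j : ℕ) ≤ (i : ℕ) then
      (-1 : k) ^ ((i : ℕ) + 1 + 1) * δ ^ (((i : ℕ) + 1) + ((j : ℕ) + 1)) *
        (Nat.choose ((i : ℕ) + 1) ((j : ℕ) + 1) : k)
    else 0

/-- ℕ-indexed entry function for `Smat` (valid once `δ² = 1`). -/
def Sval {k : Type} [Field k] (δ : k) (a b : ℕ) : k :=
  (-1 : k) ^ a * δ ^ (a + b) * (Nat.choose (a + 1) (b + 1) : k)

lemma Sval_eq_zero {k : Type} [Field k] (δ : k) {a b : ℕ} (h : a < b) : Sval δ a b = 0 := by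
  unfold Sval
  rw [Nat.choose_eq_zero_of_lt (by omega)]
  simp

lemma Smat_eq {k : Type} [Field k] {m : ℕ} {δ : k} (hδ2 : δ ^ 2 = 1) (i j : Fin m) :
    Smat k m δ i j = Sval δ (i : ℕ) (j : ℕ) := by
  unfold Smat Sval
  simp only [Matrix.of_apply]
  split_ifs with h
  · have e1 : ((-1 : k)) ^ ((i : ℕ) + 1 + 1) = (-1) ^ (i : ℕ) := by
      rw [pow_succ, pow_succ]; ring
    have e2 : δ ^ (((i : ℕ) + 1) + ((j : ℕ) + 1)) = δ ^ ((i : ℕ) + (j : ℕ)) := by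
      rw [show ((i : ℕ) + 1) + ((j : ℕ) + 1) = ((i : ℕ) + (j : ℕ)) + 2 by ring, pow_add, hδ2,
        mul_one]
    rw [e1, e2]
  · rw [Nat.choose_eq_zero_of_lt (by omega)]
    simp

lemma pascal {k : Type} [Field k] {δ : k} (hδ2 : δ ^ 2 = 1) (a b : ℕ) :
    δ * Sval δ (a + 1) (b + 1) + δ * Sval δ a b + Sval δ a (b + 1) = 0 := by
  unfold Sval
  have hc : ((a + 1 + 1).choose (b + 1 + 1) : k)
      = ((a + 1).choose (b + 1) : k) + ((a + 1).choose (b + 1 + 1) : k) := by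
    rw [Nat.choose_succ_succ (a + 1) (b + 1)]; push_cast; ring
  rw [hc]
  have h1 : δ ^ (a + 1 + (b + 1)) = δ ^ (a + b) * δ ^ 2 := by ring
  have h2 : δ ^ (a + (b + 1)) = δ ^ (a + b) * δ := by ring
  have h3 : ((-1 : k)) ^ (a + 1) = -((-1 : k)) ^ a := by rw [pow_succ]; ring
  rw [h1, h2, h3, hδ2]
  ring

lemma term_eq {k : Type} [Field k] {δ : k} (hδ2 : δ ^ 2 = 1) {i j t : ℕ} (hji : j ≤ i)
    (ht : t ≤ i - j) :
    Sval δ i (j + t) * Sval δ (j + t) j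
      = ((-1 : k) ^ (i + j) * δ ^ (i + j) * ((i + 1).choose (j + 1) : k))
        * ((-1 : k) ^ t * ((i - j).choose t : k)) := by
  unfold Sval
  have hcc : (i + 1).choose (j + t + 1) * (j + t + 1).choose (j + 1)
      = (i + 1).choose (j + 1) * (i - j).choose t := by
    rw [Nat.choose_mul (by omega)]
    have e1 : i + 1 - (j + 1) = i - j := by omega
    have e2 : j + t + 1 - (j + 1) = t := by omega
    rw [e1, e2]
  have hccc : (((i + 1).choose (j + t + 1) : k)) * ((j + t + 1).choose (j + 1) : k)
      = ((i + 1).choose (j + 1) : k) * ((i - j).choose t : k) := by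
    exact_mod_cast congrArg (Nat.cast : ℕ → k) hcc
  have hd : δ ^ (i + (j + t)) * δ ^ (j + t + j) = δ ^ (i + j) := by
    rw [← pow_add, show i + (j + t) + (j + t + j) = (i + j) + 2 * (j + t) by ring, pow_add,
      pow_mul, hδ2, one_pow, mul_one]
  have hs : ((-1 : k)) ^ i * ((-1 : k)) ^ (j + t) = (-1 : k) ^ (i + j) * (-1 : k) ^ t := by
    rw [← pow_add, ← pow_add]
    congr 1
    omega
  calc ((-1 : k) ^ i * δ ^ (i + (j + t)) * ((i + 1).choose (j + t + 1) : k))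
        * ((-1 : k) ^ (j + t) * δ ^ (j + t + j) * ((j + t + 1).choose (j + 1) : k))
      = ((-1 : k) ^ i * (-1 : k) ^ (j + t)) * (δ ^ (i + (j + t)) * δ ^ (j + t + j))
          * (((i + 1).choose (j + t + 1) : k) * ((j + t + 1).choose (j + 1) : k)) := by ring
    _ = ((-1 : k) ^ (i + j) * (-1 : k) ^ t) * δ ^ (i + j)
          * (((i + 1).choose (j + 1) : k) * ((i - j).choose t : k)) := by rw [hs, hd, hccc]
    _ = _ := by ring

lemma alt_sum {k : Type} [Field k] (n : ℕ) :
    (∑ t ∈ Finset.range (n + 1), ((-1 : k) ^ t * (n.choose t : k)))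
      = if n = 0 then 1 else 0 := by
  have h := Int.alternating_sum_range_choose (n := n)
  calc (∑ t ∈ Finset.range (n + 1), ((-1 : k) ^ t * (n.choose t : k)))
      = ((∑ t ∈ Finset.range (n + 1), ((-1 : ℤ) ^ t * (n.choose t : ℤ)) : ℤ) : k) := by
        push_cast; ring
    _ = (((if n = 0 then 1 else 0 : ℤ)) : k) := by rw [h]
    _ = _ := by split_ifs <;> simp

lemma Ssq {k : Type} [Field k] {m : ℕ} {δ : k} (hδ2 : δ ^ 2 = 1) :
    Smat k m δ * Smat k m δ = 1 := by
  ext i j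
  rw [Matrix.mul_apply, Matrix.one_apply]
  rw [Finset.sum_congr rfl (fun l _ => by rw [Smat_eq hδ2, Smat_eq hδ2])]
  rw [Fin.sum_univ_eq_sum_range (fun l => Sval δ (i : ℕ) l * Sval δ l (j : ℕ)) m]
  have hsub : Finset.Icc (j : ℕ) (i : ℕ) ⊆ Finset.range m := by
    intro l hl
    simp only [Finset.mem_Icc] at hl
    simp only [Finset.mem_range]
    have := i.isLt
    omega
  have hv : ∀ l ∈ Finset.range m, l ∉ Finset.Icc (j : ℕ) (i : ℕ) →
      Sval δ (i : ℕ) l * Sval δ l (j : ℕ) = 0 := by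
    intro l _ hnl
    simp only [Finset.mem_Icc, not_and, not_le] at hnl
    rcases lt_or_ge l (j : ℕ) with h | h
    · rw [Sval_eq_zero δ h, mul_zero]
    · rw [Sval_eq_zero δ (hnl h), zero_mul]
  rw [← Finset.sum_subset hsub hv]
  rcases lt_or_ge (i : ℕ) (j : ℕ) with hij | hij
  · rw [Finset.Icc_eq_empty (by omega), Finset.sum_empty]
    have hne : i ≠ j := by
      intro h; rw [h] at hij; exact lt_irrefl _ hij
    rw [if_neg hne]
  · rw [← Finset.Ico_add_one_right_eq_Icc, Finset.sum_Ico_eq_sum_range]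
    have hn : (i : ℕ) + 1 - (j : ℕ) = ((i : ℕ) - (j : ℕ)) + 1 := by omega
    rw [hn]
    rw [Finset.sum_congr rfl (fun t ht =>
      term_eq hδ2 hij (by simpa [Nat.lt_succ_iff] using Finset.mem_range.mp ht))]
    rw [← Finset.mul_sum, alt_sum]
    by_cases h : (i : ℕ) = (j : ℕ)
    · rw [if_pos (by omega), if_pos (Fin.ext h), mul_one, h, Nat.choose_self]
      rw [show (j : ℕ) + (j : ℕ) = 2 * (j : ℕ) by ring, pow_mul, pow_mul, hδ2, neg_one_sq]
      norm_num
    · rw [if_neg (by omega), if_neg (fun hh => h (congrArg Fin.val hh)), mul_zero]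

lemma SJ_apply {k : Type} [Field k] {m : ℕ} {δ : k} (hδ2 : δ ^ 2 = 1) (i j : Fin m) :
    (Smat k m δ * Jmat k m δ) i j
      = δ * Sval δ (i : ℕ) (j : ℕ) + Sval δ (i : ℕ) ((j : ℕ) + 1) := by
  rw [Matrix.mul_apply]
  have hterm : ∀ q : Fin m, Smat k m δ i q * Jmat k m δ q j
      = (if q = j then δ * Sval δ (i : ℕ) (j : ℕ) else 0)
        + (if (q : ℕ) = (j : ℕ) + 1 then Sval δ (i : ℕ) ((j : ℕ) + 1) else 0) := by
    intro q
    rw [Smat_eq hδ2]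
    unfold Jmat
    simp only [Matrix.of_apply]
    by_cases h1 : q = j
    · subst h1
      rw [if_pos rfl, if_pos rfl, if_neg (by omega), add_zero]
      ring
    · rw [if_neg h1, if_neg h1]
      by_cases h2 : (q : ℕ) = (j : ℕ) + 1
      · rw [if_pos h2, if_pos h2, h2, mul_one, zero_add]
      · rw [if_neg h2, if_neg h2, mul_zero, add_zero]
  rw [Finset.sum_congr rfl (fun q _ => hterm q), Finset.sum_add_distrib]
  congr 1
  · rw [Finset.sum_ite_eq' Finset.univ j (fun _ => δ * Sval δ (i : ℕ) (j : ℕ)),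
      if_pos (Finset.mem_univ j)]
  · rw [Fin.sum_univ_eq_sum_range
      (fun l => if l = (j : ℕ) + 1 then Sval δ (i : ℕ) ((j : ℕ) + 1) else 0) m]
    rw [Finset.sum_ite_eq' (Finset.range m) ((j : ℕ) + 1)
      (fun _ => Sval δ (i : ℕ) ((j : ℕ) + 1))]
    by_cases hjm : (j : ℕ) + 1 < m
    · rw [if_pos (Finset.mem_range.mpr hjm)]
    · rw [if_neg (by simp only [Finset.mem_range]; omega)]
      have hi : (i : ℕ) < (j : ℕ) + 1 := by
        have := i.isLt; have := j.isLt; omega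
      rw [Sval_eq_zero δ hi]

lemma JSJ {k : Type} [Field k] {m : ℕ} {δ : k} (hδ2 : δ ^ 2 = 1) :
    Jmat k m δ * (Smat k m δ * Jmat k m δ) = Smat k m δ := by
  ext i j
  rw [Matrix.mul_apply, Smat_eq hδ2]
  have hterm : ∀ p : Fin m, Jmat k m δ i p * (Smat k m δ * Jmat k m δ) p j
      = (if p = i then δ * (δ * Sval δ (i : ℕ) (j : ℕ) + Sval δ (i : ℕ) ((j : ℕ) + 1)) else 0)
        + (if (p : ℕ) + 1 = (i : ℕ)
            then δ * Sval δ (p : ℕ) (j : ℕ) + Sval δ (p : ℕ) ((j : ℕ) + 1) else 0) := by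
    intro p
    rw [SJ_apply hδ2]
    unfold Jmat
    simp only [Matrix.of_apply]
    by_cases h1 : p = i
    · subst h1
      rw [if_pos rfl, if_pos rfl, if_neg (by omega), add_zero]
    · rw [if_neg (fun h => h1 h.symm), if_neg h1]
      by_cases h2 : (i : ℕ) = (p : ℕ) + 1
      · rw [if_pos h2, one_mul, if_pos h2.symm, zero_add]
      · rw [if_neg h2, zero_mul, if_neg (fun h => h2 h.symm), add_zero]
  rw [Finset.sum_congr rfl (fun p _ => hterm p), Finset.sum_add_distrib,
    Finset.sum_ite_eq' Finset.univ i _, if_pos (Finset.mem_univ i)]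
  have hsecond : (∑ p : Fin m, (if (p : ℕ) + 1 = (i : ℕ)
        then δ * Sval δ (p : ℕ) (j : ℕ) + Sval δ (p : ℕ) ((j : ℕ) + 1) else 0))
      = if 1 ≤ (i : ℕ)
          then δ * Sval δ ((i : ℕ) - 1) (j : ℕ) + Sval δ ((i : ℕ) - 1) ((j : ℕ) + 1) else 0 := by
    rw [Fin.sum_univ_eq_sum_range
      (fun l => if l + 1 = (i : ℕ) then δ * Sval δ l (j : ℕ) + Sval δ l ((j : ℕ) + 1) else 0) m]
    rcases Nat.eq_zero_or_pos (i : ℕ) with h0 | h0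
    · rw [if_neg (by omega)]
      exact Finset.sum_eq_zero fun l _ => by rw [if_neg (by omega)]
    · rw [if_pos (show 1 ≤ (i : ℕ) by omega)]
      rw [Finset.sum_congr rfl (fun l _ => by
        rw [if_congr (show (l + 1 = (i : ℕ)) ↔ (l = (i : ℕ) - 1) by omega) rfl rfl])]
      rw [Finset.sum_ite_eq' (Finset.range m) ((i : ℕ) - 1)
        (fun l => δ * Sval δ l (j : ℕ) + Sval δ l ((j : ℕ) + 1)),
        if_pos (Finset.mem_range.mpr (by have := i.isLt; omega))]
  rw [hsecond]
  rcases Nat.eq_zero_or_pos (i : ℕ) with h0 | h0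
  · rw [if_neg (by omega), h0, add_zero, Sval_eq_zero δ (show 0 < (j : ℕ) + 1 by omega)]
    linear_combination Sval δ 0 (j : ℕ) * hδ2
  · rw [if_pos (show 1 ≤ (i : ℕ) by omega)]
    obtain ⟨a, ha⟩ : ∃ a, (i : ℕ) = a + 1 := ⟨(i : ℕ) - 1, by omega⟩
    rw [ha, Nat.add_sub_cancel]
    linear_combination Sval δ (a + 1) (j : ℕ) * hδ2 + pascal hδ2 a (j : ℕ)

/-- **The involutions `S̃_{m,δ}` and `W_{m,δ}`.**  Let `k` be a field with `char k ≠ 2`,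
`m ≥ 1` and `δ ∈ {1,-1}`.  Then `S̃_{m,δ}² = E_m` and
`S̃_{m,δ} · J_m(δ) = J_m(δ)⁻¹ · S̃_{m,δ}`; consequently `W_{m,δ}(S) := S̃_{m,δ}·J_m(δ)` and
`W_{m,δ}(T) := S̃_{m,δ}` are involutive `m×m` matrices. -/
theorem statement_14 (k : Type) [Field k] (hchar : (2 : k) ≠ 0)
    (m : ℕ) (hm : 1 ≤ m) (δ : k) (hδ : δ = 1 ∨ δ = -1) :
    Smat k m δ * Smat k m δ = 1 ∧
    Smat k m δ * Jmat k m δ = (Jmat k m δ)⁻¹ * Smat k m δ ∧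
    (Smat k m δ * Jmat k m δ) * (Smat k m δ * Jmat k m δ) = 1 := by
  have hδ2 : δ ^ 2 = 1 := by rcases hδ with h | h <;> subst h <;> norm_num
  have hS := Ssq (k := k) (m := m) hδ2
  have hJ := JSJ (k := k) (m := m) hδ2
  have h3 : (Smat k m δ * Jmat k m δ) * (Smat k m δ * Jmat k m δ) = 1 := by
    rw [Matrix.mul_assoc, hJ, hS]
  refine ⟨hS, ?_, h3⟩
  have hright : Jmat k m δ * (Smat k m δ * Jmat k m δ * Smat k m δ) = 1 := by
    rw [← Matrix.mul_assoc, ← Matrix.mul_assoc, Matrix.mul_assoc (Jmat k m δ), hJ, hS]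
  have hJinv : (Jmat k m δ)⁻¹ = Smat k m δ * Jmat k m δ * Smat k m δ :=
    Matrix.inv_eq_right_inv hright
  rw [hJinv, Matrix.mul_assoc (Smat k m δ * Jmat k m δ), hS, Matrix.mul_one]

end SG
end
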